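/- Let X and Y be real-valued random variables on a common probability space, each having the Logistic distribution, and suppose their joint survival function G(x,y) := P(X > x, Y > y) satisfies G(x,y) = H̄(x)·H̄(y)·exp(∫_0^{∞} G(t−x, t−y) dt) for all x, y ∈ ℝ. Then X = Y almost surely. -/

import Mathlib

open MeasureTheory Real Set Filter
open Topology

/-- The Logistic distribution function `H(x) = 1/(1+e^{-x})`. -/
noncomputable def H (x : ℝ) : ℝ := 1 / (1 + Real.exp (-x))

/-- The tail `H̄ := 1 - H` of the Logistic distribution function. -/
noncomputable def Hbar (x : ℝ) : ℝ := 1 - H x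

/-- The set 𝔉 of continuous, non-increasing functions `f : ℝ → [0,1]`
with `H̄(x)² ≤ f(x) ≤ H̄(x)` for all `x`. -/
def memF (f : ℝ → ℝ) : Prop :=
  (∀ x, f x ∈ Set.Icc (0:ℝ) 1) ∧ Continuous f ∧ Antitone f ∧
    ∀ x, Hbar x ^ 2 ≤ f x ∧ f x ≤ Hbar x

/-- The operator `T(f)(x) := H̄(x)² · exp(∫_{-x}^∞ f(s) ds)`. -/
noncomputable def T (f : ℝ → ℝ) (x : ℝ) : ℝ :=
  Hbar x ^ 2 * Real.exp (∫ s in Set.Ioi (-x), f s)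

lemma one_add_exp_pos (x : ℝ) : 0 < 1 + Real.exp x := by positivity

lemma H_pos (x : ℝ) : 0 < H x := by
  unfold H; positivity

lemma H_lt_one (x : ℝ) : H x < 1 := by
  unfold H
  rw [div_lt_one (one_add_exp_pos _)]
  linarith [Real.exp_pos (-x)]

lemma H_nonneg (x : ℝ) : 0 ≤ H x := (H_pos x).le
lemma H_le_one (x : ℝ) : H x ≤ 1 := (H_lt_one x).le

lemma Hbar_eq (x : ℝ) : Hbar x = 1 / (1 + Real.exp x) := by
  unfold Hbar H
  have h1 := (one_add_exp_pos (-x)).ne'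
  have h2 := (one_add_exp_pos x).ne'
  have h3 : Real.exp (-x) * Real.exp x = 1 := by rw [← Real.exp_add]; simp
  field_simp
  linear_combination h3

lemma Hbar_pos (x : ℝ) : 0 < Hbar x := by
  rw [Hbar_eq]; positivity

lemma Hbar_nonneg (x : ℝ) : 0 ≤ Hbar x := (Hbar_pos x).le
lemma Hbar_le_one (x : ℝ) : Hbar x ≤ 1 := by
  unfold Hbar; linarith [H_pos x]

lemma H_neg (x : ℝ) : H (-x) = Hbar x := by
  unfold H; rw [Hbar_eq, neg_neg]

lemma Hbar_neg (x : ℝ) : Hbar (-x) = H x := by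
  unfold Hbar; rw [H_neg]; unfold Hbar; ring

lemma H_add_Hbar (x : ℝ) : H x + Hbar x = 1 := by unfold Hbar; ring

lemma continuous_H : Continuous H := by
  unfold H
  exact continuous_const.div (by continuity) fun x => (one_add_exp_pos (-x)).ne'

lemma continuous_Hbar : Continuous Hbar := by
  unfold Hbar; exact continuous_const.sub continuous_H

lemma hasDerivAt_H (x : ℝ) : HasDerivAt H (H x * Hbar x) x := by
  have h1 : HasDerivAt (fun y : ℝ => 1 + Real.exp (-y)) (-Real.exp (-x)) x := by
    have := ((hasDerivAt_id x).neg.exp).const_add 1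
    simpa using this
  have h2 := h1.inv (one_add_exp_pos (-x)).ne'
  have heq : -(-Real.exp (-x)) / (1 + Real.exp (-x)) ^ 2 = (1 + Real.exp (-x))⁻¹ * Hbar x := by
    rw [Hbar_eq]
    have h1' := (one_add_exp_pos (-x)).ne'
    have h2' := (one_add_exp_pos x).ne'
    have h3 : Real.exp (-x) * Real.exp x = 1 := by rw [← Real.exp_add]; simp
    field_simp
    linear_combination h3
  have h5 : H = fun y => (1 + Real.exp (-y))⁻¹ := by funext y; rw [H, one_div]
  have h4 : HasDerivAt (fun y => (1 + Real.exp (-y))⁻¹) ((1 + Real.exp (-x))⁻¹ * Hbar x) x :=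
    heq ▸ h2
  rw [h5]
  simpa using h4

lemma tendsto_H_atTop : Tendsto H atTop (𝓝 1) := by
  have h : Tendsto (fun x : ℝ => Real.exp (-x)) atTop (𝓝 0) :=
    Real.tendsto_exp_atBot.comp tendsto_neg_atTop_atBot
  have := ((tendsto_const_nhds (x := (1:ℝ))).add h)
  have h2 : Tendsto (fun x : ℝ => 1 / (1 + Real.exp (-x))) atTop (𝓝 (1 / (1 + 0))) :=
    Tendsto.div tendsto_const_nhds (by simpa using this) (by norm_num)
  have h5 : H = fun y => 1 / (1 + Real.exp (-y)) := rfl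
  rw [h5]
  simpa using h2

lemma tendsto_Hbar_atTop : Tendsto Hbar atTop (𝓝 0) := by
  have := (tendsto_const_nhds (x := (1:ℝ))).sub tendsto_H_atTop
  exact (by simpa using this : Tendsto (fun x => 1 - H x) atTop (𝓝 0))

-- integral lemmas
lemma integrableOn_HHbar_Ioi (y : ℝ) : IntegrableOn (fun s => H s * Hbar s) (Ioi y) := by
  exact integrableOn_Ioi_deriv_of_nonneg' (g := H) (fun x _ => hasDerivAt_H x)
    (fun x _ => mul_nonneg (H_nonneg x) (Hbar_nonneg x)) tendsto_H_atTop

lemma integral_HHbar_Ioi (y : ℝ) : ∫ s in Ioi y, H s * Hbar s = Hbar y := by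
  rw [integral_Ioi_of_hasDerivAt_of_nonneg' (g := H) (fun x _ => hasDerivAt_H x)
    (fun x _ => mul_nonneg (H_nonneg x) (Hbar_nonneg x)) tendsto_H_atTop]
  rfl

lemma integrableOn_Iic_comp_neg {g : ℝ → ℝ} {c : ℝ}
    (h : IntegrableOn (fun s => g (-s)) (Ioi (-c))) : IntegrableOn g (Iic c) := by
  have A : MeasurableEmbedding (fun x : ℝ => -x) :=
    (Homeomorph.neg ℝ).isClosedEmbedding.measurableEmbedding
  have h1 : IntegrableOn (fun s => g (-s)) (Ici (-c)) :=
    (integrableOn_Ici_iff_integrableOn_Ioi).2 h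
  have h2 : volume.restrict (Iic c) =
      Measure.map (fun x : ℝ => -x) (volume.restrict (Ici (-c))) := by
    rw [show (Ici (-c) : Set ℝ) = (fun x : ℝ => -x) ⁻¹' (Iic c) by
      ext t; simp [neg_le]]
    rw [← Measure.restrict_map A.measurable measurableSet_Iic,
      Measure.map_neg_eq_self (volume : Measure ℝ)]
  unfold IntegrableOn
  rw [h2, A.integrable_map_iff]
  exact h1

lemma integrableOn_HHbar_Iic (y : ℝ) : IntegrableOn (fun s => H s * Hbar s) (Iic y) := by
  apply integrableOn_Iic_comp_neg
  have := integrableOn_HHbar_Ioi (-y)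
  apply this.congr_fun _ measurableSet_Ioi
  intro s _
  show H s * Hbar s = H (-s) * Hbar (-s)
  rw [H_neg, Hbar_neg]; ring

lemma integral_HHbar_Iic (y : ℝ) : ∫ s in Iic y, H s * Hbar s = H y := by
  have h1 : ∀ s : ℝ, H (-s) * Hbar (-s) = H s * Hbar s := by
    intro s; rw [H_neg, Hbar_neg]; ring
  have h2 : (∫ s in Iic y, H s * Hbar s) = ∫ s in Iic y, (fun t => H t * Hbar t) (-s) := by
    apply setIntegral_congr_fun measurableSet_Iic
    intro s _
    show H s * Hbar s = H (-s) * Hbar (-s)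
    rw [H_neg, Hbar_neg]; ring
  have h4 := integral_comp_neg_Iic y (fun t => H t * Hbar t)
  rw [h2, h4, integral_HHbar_Ioi, Hbar_neg]

lemma integrable_HHbar : Integrable (fun s => H s * Hbar s) := by
  rw [← integrableOn_univ, ← Iic_union_Ioi (a := (0:ℝ))]
  exact (integrableOn_HHbar_Iic 0).union (integrableOn_HHbar_Ioi 0)

lemma integral_HHbar : ∫ s : ℝ, H s * Hbar s = 1 := by
  rw [← intervalIntegral.integral_Iic_add_Ioi (b := (0:ℝ)) (integrableOn_HHbar_Iic 0) (integrableOn_HHbar_Ioi 0),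
    integral_HHbar_Iic, integral_HHbar_Ioi]
  have : H 0 = 1/2 := by unfold H; norm_num
  rw [this]; unfold Hbar; rw [this]; norm_num

lemma hasDerivAt_H2 (x : ℝ) : HasDerivAt (fun s => H s ^ 2 / 2) (Hbar x * H x ^ 2) x := by
  have := ((hasDerivAt_H x).pow 2).div_const 2
  refine this.congr_deriv ?_
  ring

lemma integrableOn_HbarH2_Ioi (y : ℝ) : IntegrableOn (fun s => Hbar s * H s ^ 2) (Ioi y) := by
  exact integrableOn_Ioi_deriv_of_nonneg' (fun x _ => hasDerivAt_H2 x)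
    (fun x _ => mul_nonneg (Hbar_nonneg x) (by positivity))
    (by simpa using (tendsto_H_atTop.pow 2).div_const 2)

lemma integral_HbarH2_Ioi (y : ℝ) : ∫ s in Ioi y, Hbar s * H s ^ 2 = 1/2 - H y ^ 2 / 2 := by
  rw [integral_Ioi_of_hasDerivAt_of_nonneg' (fun x _ => hasDerivAt_H2 x)
    (fun x _ => mul_nonneg (Hbar_nonneg x) (by positivity))
    (by simpa using (tendsto_H_atTop.pow 2).div_const 2)]
  norm_num

lemma hasDerivAt_Hbar2 (x : ℝ) : HasDerivAt (fun s => -(Hbar s ^ 2) / 2) (H x * Hbar x ^ 2) x := by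
  have hb : ∀ s : ℝ, Hbar s = 1 - H s := fun s => rfl
  have h1 : HasDerivAt Hbar (-(H x * Hbar x)) x := by
    have := (hasDerivAt_const x (1:ℝ)).sub (hasDerivAt_H x)
    rw [show ((fun _ => (1:ℝ)) - H) = Hbar from rfl] at this
    simpa using this
  have := ((h1.pow 2).neg).div_const 2
  refine this.congr_deriv ?_
  ring

lemma integrableOn_HHbar2_Ioi (y : ℝ) : IntegrableOn (fun s => H s * Hbar s ^ 2) (Ioi y) := by
  exact integrableOn_Ioi_deriv_of_nonneg' (fun x _ => hasDerivAt_Hbar2 x)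
    (fun x _ => mul_nonneg (H_nonneg x) (by positivity))
    (by simpa using ((tendsto_Hbar_atTop.pow 2).neg).div_const 2)

lemma integral_HHbar2_Ioi (y : ℝ) : ∫ s in Ioi y, H s * Hbar s ^ 2 = Hbar y ^ 2 / 2 := by
  rw [integral_Ioi_of_hasDerivAt_of_nonneg' (fun x _ => hasDerivAt_Hbar2 x)
    (fun x _ => mul_nonneg (H_nonneg x) (by positivity))
    (by simpa using ((tendsto_Hbar_atTop.pow 2).neg).div_const 2)]
  ring

lemma integrableOn_HbarH2_Iic (y : ℝ) : IntegrableOn (fun s => Hbar s * H s ^ 2) (Iic y) := by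
  apply integrableOn_Iic_comp_neg
  apply (integrableOn_HHbar2_Ioi (-y)).congr_fun _ measurableSet_Ioi
  intro s _
  show H s * Hbar s ^ 2 = Hbar (-s) * H (-s) ^ 2
  rw [H_neg, Hbar_neg]

lemma integrable_HbarH2 : Integrable (fun s => Hbar s * H s ^ 2) := by
  rw [← integrableOn_univ, ← Iic_union_Ioi (a := (0:ℝ))]
  exact (integrableOn_HbarH2_Iic 0).union (integrableOn_HbarH2_Ioi 0)

lemma integral_HbarH2 : ∫ s : ℝ, Hbar s * H s ^ 2 = 1/2 := by
  rw [← intervalIntegral.integral_Iic_add_Ioi (b := (0:ℝ)) (integrableOn_HbarH2_Iic 0) (integrableOn_HbarH2_Ioi 0)]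
  have h2 : (∫ s in Iic (0:ℝ), Hbar s * H s ^ 2) = ∫ s in Ioi (0:ℝ), H s * Hbar s ^ 2 := by
    have h3 : (∫ s in Iic (0:ℝ), Hbar s * H s ^ 2) = ∫ s in Iic (0:ℝ), (fun t => H t * Hbar t ^ 2) (-s) := by
      apply setIntegral_congr_fun measurableSet_Iic
      intro s _
      show Hbar s * H s ^ 2 = H (-s) * Hbar (-s) ^ 2
      rw [H_neg, Hbar_neg]
    rw [h3]
    have h4 := integral_comp_neg_Iic (0:ℝ) (fun t => H t * Hbar t ^ 2)
    rw [neg_zero] at h4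
    exact h4
  rw [h2, integral_HHbar2_Ioi, integral_HbarH2_Ioi]
  have h0 : H 0 = 1/2 := by unfold H; norm_num
  have hb0 : Hbar 0 = 1/2 := by unfold Hbar; rw [h0]; norm_num
  rw [h0, hb0]; norm_num

lemma hasDerivAt_logH (x : ℝ) : HasDerivAt (fun s => -Real.log (1 + Real.exp (-s))) (Hbar x) x := by
  have h1 : HasDerivAt (fun y : ℝ => 1 + Real.exp (-y)) (-Real.exp (-x)) x := by
    have := ((hasDerivAt_id x).neg.exp).const_add 1
    simpa using this
  have h2 := (h1.log (one_add_exp_pos (-x)).ne').neg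
  refine h2.congr_deriv ?_
  rw [Hbar_eq]
  have h3 : Real.exp (-x) * Real.exp x = 1 := by rw [← Real.exp_add]; simp
  have h1' := (one_add_exp_pos (-x)).ne'
  have h2' := (one_add_exp_pos x).ne'
  field_simp
  linear_combination h3

lemma tendsto_logH : Tendsto (fun s => -Real.log (1 + Real.exp (-s))) atTop (𝓝 0) := by
  have h : Tendsto (fun x : ℝ => Real.exp (-x)) atTop (𝓝 0) :=
    Real.tendsto_exp_atBot.comp tendsto_neg_atTop_atBot
  have h2 : Tendsto (fun x : ℝ => 1 + Real.exp (-x)) atTop (𝓝 1) := by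
    simpa using (tendsto_const_nhds (x := (1:ℝ))).add h
  have h3 := (Real.continuousAt_log (by norm_num : (1:ℝ) ≠ 0)).tendsto.comp h2
  simpa using h3.neg

lemma integrableOn_Hbar_Ioi (y : ℝ) : IntegrableOn Hbar (Ioi y) := by
  exact integrableOn_Ioi_deriv_of_nonneg' (fun x _ => hasDerivAt_logH x)
    (fun x _ => Hbar_nonneg x) tendsto_logH

lemma integral_Hbar_Ioi (y : ℝ) : ∫ s in Ioi y, Hbar s = Real.log (1 + Real.exp (-y)) := by
  rw [integral_Ioi_of_hasDerivAt_of_nonneg' (fun x _ => hasDerivAt_logH x)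
    (fun x _ => Hbar_nonneg x) tendsto_logH]
  ring

lemma H_mono : Monotone H := by
  intro s t hst
  unfold H
  apply one_div_le_one_div_of_le (one_add_exp_pos (-t))
  have := Real.exp_le_exp.2 (neg_le_neg hst)
  linarith

lemma one_sub_exp_le (t : ℝ) : 1 - Real.exp (-t) ≤ t := by
  linarith [Real.add_one_le_exp (-t)]

lemma one_sub_exp_quad {t : ℝ} (h0 : 0 ≤ t) (h1 : t ≤ 1) : 1 - Real.exp (-t) ≤ t - t^2/4 := by
  have h2 : (0:ℝ) ≤ 1 - t/2 := by linarith
  have h3 : 1 - t/2 ≤ Real.exp (-(t/2)) := by linarith [Real.add_one_le_exp (-(t/2))]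
  have h4 : (1 - t/2)^2 ≤ Real.exp (-(t/2))^2 := by
    exact pow_le_pow_left₀ h2 h3 2
  have h5 : Real.exp (-(t/2))^2 = Real.exp (-t) := by
    rw [pow_two, ← Real.exp_add]; ring_nf
  rw [h5] at h4
  nlinarith

lemma conv_ineq {c u v : ℝ} (hc : 0 ≤ c) (hu : 0 < u) (huv : u ≤ v) :
    u * (1 - Real.exp (-(c*v))) ≤ v * (1 - Real.exp (-(c*u))) := by
  have hv : 0 < v := lt_of_lt_of_le hu huv
  have hab : u/v + (1 - u/v) = 1 := by ring
  have key := convexOn_exp.2 (mem_univ (-(c*v))) (mem_univ (0:ℝ))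
    (by positivity : (0:ℝ) ≤ u/v)
    (by rw [sub_nonneg]; exact div_le_one_of_le₀ huv hv.le) hab
  simp only [smul_eq_mul, mul_zero, add_zero, Real.exp_zero, mul_one] at key
  have he : u / v * -(c * v) = -(c*u) := by field_simp
  rw [he] at key
  have := mul_le_mul_of_nonneg_left key hv.le
  rw [mul_add] at this
  have hvv : v * (u / v * Real.exp (-(c * v))) = u * Real.exp (-(c*v)) := by
    field_simp
  rw [hvv] at this
  have hvv2 : v * (1 - u/v) = v - u := by field_simp
  rw [hvv2] at this
  nlinarith

lemma key (f : ℝ → ℝ) (hmeas : Measurable f) (h0 : ∀ x, 0 ≤ f x) (hle : ∀ x, f x ≤ Hbar x)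
    (hfix : ∀ x, f x = Hbar x ^ 2 * Real.exp (∫ s in Ioi (-x), f s)) :
    ∀ x, f x = Hbar x := by
  have hfint : ∀ y : ℝ, IntegrableOn f (Ioi y) := by
    intro y
    apply Integrable.mono' (integrableOn_Hbar_Ioi y) hmeas.aestronglyMeasurable.restrict
    refine ae_of_all _ fun s => ?_
    rw [Real.norm_eq_abs, abs_of_nonneg (h0 s)]
    exact hle s
  have hwint : ∀ y : ℝ, IntegrableOn (fun s => Hbar s - f s) (Ioi y) := fun y =>
    (integrableOn_Hbar_Ioi y).sub (hfint y)
  set W : ℝ → ℝ := fun x => ∫ s in Ioi (-x), (Hbar s - f s) with hWdef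
  have hW0 : ∀ x, 0 ≤ W x := fun x =>
    setIntegral_nonneg measurableSet_Ioi (fun s _ => sub_nonneg.2 (hle s))
  have hfW : ∀ x, f x = Hbar x * Real.exp (-(W x)) := by
    intro x
    have h2 : W x = Real.log (1 + Real.exp x) - ∫ s in Ioi (-x), f s := by
      rw [hWdef]
      simp only
      rw [integral_sub (integrableOn_Hbar_Ioi (-x)) (hfint (-x)), integral_Hbar_Ioi, neg_neg]
    have h1 : (∫ s in Ioi (-x), f s) = Real.log (1 + Real.exp x) - W x := by linarith
    rw [hfix x, h1, Real.exp_sub, Real.exp_log (one_add_exp_pos x), Hbar_eq, Real.exp_neg]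
    have hne := (one_add_exp_pos x).ne'
    have hee := (Real.exp_pos (W x)).ne'
    field_simp
  have hflb : ∀ x, Hbar x ^ 2 ≤ f x := by
    intro x
    rw [hfix x]
    have h1 : (1:ℝ) ≤ Real.exp (∫ s in Ioi (-x), f s) := by
      rw [← Real.exp_zero]
      exact Real.exp_le_exp.2 (setIntegral_nonneg measurableSet_Ioi (fun s _ => h0 s))
    nlinarith [sq_nonneg (Hbar x)]
  have hwub : ∀ s, Hbar s - f s ≤ H s * Hbar s := by
    intro s
    have h1 := hflb s
    have hb : Hbar s = 1 - H s := rfl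
    have h2 : Hbar s - Hbar s ^ 2 = H s * Hbar s := by rw [hb]; ring
    linarith [h1, h2]
  have base : ∀ x, W x ≤ H x := by
    intro x
    have h1 : W x ≤ ∫ s in Ioi (-x), H s * Hbar s :=
      setIntegral_mono_on (hwint (-x)) (integrableOn_HHbar_Ioi (-x)) measurableSet_Ioi
        (fun s _ => hwub s)
    rwa [integral_HHbar_Ioi, Hbar_neg] at h1
  have step : ∀ c : ℝ, 0 ≤ c → c ≤ 1 → (∀ s, W s ≤ c * H s) →
      ∀ x, W x ≤ (c - c^2/8) * H x := by
    intro c hc0 hc1 hcW x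
    set y := -x with hy
    set g : ℝ → ℝ := fun s => Hbar s * (1 - Real.exp (-(c * H s))) with hgdef
    have hgcont : Continuous g := by
      apply continuous_Hbar.mul
      exact continuous_const.sub (Real.continuous_exp.comp
        ((continuous_const.mul continuous_H).neg))
    have hg0 : ∀ s, 0 ≤ g s := by
      intro s
      apply mul_nonneg (Hbar_nonneg s)
      have : Real.exp (-(c * H s)) ≤ 1 := by
        rw [← Real.exp_zero]
        exact Real.exp_le_exp.2 (by nlinarith [H_nonneg s])
      linarith
    have hgle : ∀ s, g s ≤ H s * Hbar s := by
      intro s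
      show Hbar s * (1 - Real.exp (-(c * H s))) ≤ H s * Hbar s
      have h1 : 1 - Real.exp (-(c * H s)) ≤ c * H s := one_sub_exp_le _
      have h2 : c * H s ≤ H s := by nlinarith [H_nonneg s]
      nlinarith [Hbar_nonneg s]
    have hgint : Integrable g := by
      apply Integrable.mono' integrable_HHbar hgcont.aestronglyMeasurable
      exact ae_of_all _ fun s => by
        rw [Real.norm_eq_abs, abs_of_nonneg (hg0 s)]; exact hgle s
    have step1 : W x ≤ ∫ s in Ioi y, g s := by
      have hpt : ∀ s, Hbar s - f s ≤ g s := by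
        intro s
        rw [hfW s, hgdef]
        simp only
        have h1 : Real.exp (-(c * H s)) ≤ Real.exp (-(W s)) :=
          Real.exp_le_exp.2 (neg_le_neg (hcW s))
        nlinarith [Hbar_nonneg s]
      exact setIntegral_mono_on (hwint y) hgint.integrableOn measurableSet_Ioi
        (fun s _ => hpt s)
    set k : ℝ → ℝ := fun s => (1 - Real.exp (-(c * H s))) / H s with hkdef
    have hkmono : ∀ s t : ℝ, s ≤ t → k t ≤ k s := by
      intro s t hst
      rw [hkdef]
      simp only
      rw [div_le_div_iff₀ (H_pos t) (H_pos s)]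
      have := conv_ineq hc0 (H_pos s) (H_mono hst)
      nlinarith
    have hkg : ∀ s, g s = (H s * Hbar s) * k s := by
      intro s
      rw [hgdef, hkdef]
      simp only
      field_simp [(H_pos s).ne']
    have A1 : (∫ s in Ioi y, g s) ≤ k y * Hbar y := by
      have h1 : ∀ s ∈ Ioi y, g s ≤ (H s * Hbar s) * k y := by
        intro s hs
        rw [hkg s]
        exact mul_le_mul_of_nonneg_left (hkmono y s (le_of_lt hs))
          (mul_nonneg (H_nonneg s) (Hbar_nonneg s))
      have h2 := setIntegral_mono_on hgint.integrableOn
        ((integrableOn_HHbar_Ioi y).mul_const (k y)) measurableSet_Ioi h1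
      rwa [integral_mul_const, integral_HHbar_Ioi, mul_comm] at h2
    have A2 : k y * H y ≤ ∫ s in Iic y, g s := by
      have h1 : ∀ s ∈ Iic y, (H s * Hbar s) * k y ≤ g s := by
        intro s hs
        rw [hkg s]
        exact mul_le_mul_of_nonneg_left (hkmono s y hs)
          (mul_nonneg (H_nonneg s) (Hbar_nonneg s))
      have h2 := setIntegral_mono_on ((integrableOn_HHbar_Iic y).mul_const (k y))
        hgint.integrableOn measurableSet_Iic h1
      rwa [integral_mul_const, integral_HHbar_Iic, mul_comm] at h2
    have A3 : (∫ s : ℝ, g s) ≤ c - c^2/8 := by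
      have h1 : ∀ s, g s ≤ c * (H s * Hbar s) - c^2/4 * (Hbar s * H s ^ 2) := by
        intro s
        have ht0 : 0 ≤ c * H s := mul_nonneg hc0 (H_nonneg s)
        have ht1 : c * H s ≤ 1 := by nlinarith [H_le_one s, H_nonneg s, H_pos s]
        have hq := one_sub_exp_quad ht0 ht1
        have hbn := Hbar_nonneg s
        rw [hgdef]
        simp only
        nlinarith
      have hbA : Integrable (fun s => c * (H s * Hbar s)) := integrable_HHbar.const_mul c
      have hbB : Integrable (fun s => c^2/4 * (Hbar s * H s ^ 2)) :=
        integrable_HbarH2.const_mul (c^2/4)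
      have hbint : Integrable (fun s => c * (H s * Hbar s) - c^2/4 * (Hbar s * H s ^ 2)) :=
        hbA.sub hbB
      have h2 := integral_mono hgint hbint h1
      rw [integral_sub hbA hbB, integral_const_mul, integral_const_mul,
        integral_HHbar, integral_HbarH2] at h2
      linarith
    have hsplit : (∫ s in Iic y, g s) + (∫ s in Ioi y, g s) = ∫ s : ℝ, g s :=
      intervalIntegral.integral_Iic_add_Ioi hgint.integrableOn hgint.integrableOn
    have final : (∫ s in Ioi y, g s) ≤ Hbar y * (c - c^2/8) := by
      have e1 := mul_le_mul_of_nonneg_left A1 (H_nonneg y)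
      have e2 := mul_le_mul_of_nonneg_left A2 (Hbar_nonneg y)
      have e3 := mul_le_mul_of_nonneg_left A3 (Hbar_nonneg y)
      have e4 : Hbar y * ((∫ s in Iic y, g s) + (∫ s in Ioi y, g s)) = Hbar y * ∫ s : ℝ, g s := by
        rw [hsplit]
      have e5 : H y * (∫ s in Ioi y, g s) + Hbar y * (∫ s in Ioi y, g s)
          = ∫ s in Ioi y, g s := by
        have hsum := H_add_Hbar y
        linear_combination (∫ s in Ioi y, g s) * hsum
      nlinarith [e1, e2, e3, e4, e5]
    calc W x ≤ ∫ s in Ioi y, g s := step1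
      _ ≤ Hbar y * (c - c^2/8) := final
      _ = (c - c^2/8) * H x := by rw [hy, Hbar_neg]; ring
  have iter : ∀ n : ℕ, ∀ x, W x ≤ (8 / ((n:ℝ) + 8)) * H x := by
    intro n
    induction n with
    | zero =>
      intro x
      norm_num
      exact base x
    | succ n ih =>
      have hc0 : (0:ℝ) ≤ 8 / ((n:ℝ) + 8) := by positivity
      have hc1 : (8:ℝ) / ((n:ℝ) + 8) ≤ 1 := by
        rw [div_le_one (by positivity)]
        have : (0:ℝ) ≤ (n:ℝ) := Nat.cast_nonneg n
        linarith
      intro x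
      have h1 := step _ hc0 hc1 ih x
      have h2 : (8 / ((n:ℝ) + 8) - (8 / ((n:ℝ) + 8))^2/8) ≤ 8 / ((n:ℝ) + 1 + 8) := by
        have hn : (0:ℝ) < (n:ℝ) + 8 := by positivity
        have hn9 : (0:ℝ) < (n:ℝ) + 9 := by positivity
        rw [div_pow, div_div, div_sub_div _ _ hn.ne' (by positivity), div_le_div_iff₀ (by positivity) (by positivity)]
        ring_nf
        nlinarith [sq_nonneg ((n:ℝ))]
      have h3 : (8 / ((n:ℝ) + 8) - (8 / ((n:ℝ) + 8))^2/8) * H x ≤ (8 / ((n:ℝ) + 1 + 8)) * H x :=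
        mul_le_mul_of_nonneg_right h2 (H_nonneg x)
      push_cast
      linarith
  have hWzero : ∀ x, W x = 0 := by
    intro x
    refine le_antisymm ?_ (hW0 x)
    have hlim : Tendsto (fun n : ℕ => (8:ℝ)/((n:ℝ)+8) * H x) atTop (𝓝 0) := by
      have h1 : Tendsto (fun n : ℕ => ((n:ℝ)+8)) atTop atTop :=
        tendsto_atTop_add_const_right _ 8 tendsto_natCast_atTop_atTop
      have h2 : Tendsto (fun n : ℕ => (8:ℝ)/((n:ℝ)+8)) atTop (𝓝 0) :=
        Tendsto.div_atTop tendsto_const_nhds h1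
      simpa using h2.mul_const (H x)
    exact ge_of_tendsto hlim (Eventually.of_forall fun n => iter n x)
  intro x
  have := hfW x
  rw [hWzero x] at this
  simpa using this

/-- Let `X` and `Y` be real random variables on a common
probability space, each with the Logistic distribution, whose joint survival
function `G(x,y) := P(X > x, Y > y)` satisfies
`G(x,y) = H̄(x)·H̄(y)·exp(∫_0^∞ G(t−x, t−y) dt)` for all `x, y`. Then `X = Y`
almost surely. -/
theorem stmt16 {Ω : Type*} [MeasurableSpace Ω] (P : Measure Ω)
    [IsProbabilityMeasure P] (X Y : Ω → ℝ) (hX : Measurable X) (hY : Measurable Y)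
    (hXlog : ∀ x, (P {ω | X ω ≤ x}).toReal = H x)
    (hYlog : ∀ x, (P {ω | Y ω ≤ x}).toReal = H x)
    (G : ℝ → ℝ → ℝ)
    (hG : ∀ x y, G x y = (P {ω | x < X ω ∧ y < Y ω}).toReal)
    (heq : ∀ x y, G x y =
      Hbar x * Hbar y * Real.exp (∫ t in Set.Ioi (0:ℝ), G (t - x) (t - y))) :
    X =ᵐ[P] Y := by
  set f : ℝ → ℝ := fun x => G x x with hfdef
  have hanti : Antitone f := by
    intro a b hab
    show G b b ≤ G a a
    rw [hG a a, hG b b]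
    apply ENNReal.toReal_mono (measure_ne_top P _)
    apply measure_mono
    intro ω hω
    exact ⟨lt_of_le_of_lt hab hω.1, lt_of_le_of_lt hab hω.2⟩
  have hmeas : Measurable f := hanti.measurable
  have h0 : ∀ x, 0 ≤ f x := by
    intro x
    show 0 ≤ G x x
    rw [hG]
    exact ENNReal.toReal_nonneg
  have htailX : ∀ x : ℝ, (P {ω | x < X ω}).toReal = Hbar x := by
    intro x
    have hc : {ω | x < X ω} = {ω | X ω ≤ x}ᶜ := by ext ω; simp [not_le]
    rw [hc, prob_compl_eq_one_sub (show MeasurableSet {ω | X ω ≤ x} from hX measurableSet_Iic),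
      ENNReal.toReal_sub_of_le prob_le_one ENNReal.one_ne_top, ENNReal.toReal_one, hXlog]
    rfl
  have htailY : ∀ x : ℝ, (P {ω | x < Y ω}).toReal = Hbar x := by
    intro x
    have hc : {ω | x < Y ω} = {ω | Y ω ≤ x}ᶜ := by ext ω; simp [not_le]
    rw [hc, prob_compl_eq_one_sub (show MeasurableSet {ω | Y ω ≤ x} from hY measurableSet_Iic),
      ENNReal.toReal_sub_of_le prob_le_one ENNReal.one_ne_top, ENNReal.toReal_one, hYlog]
    rfl
  have hle : ∀ x, f x ≤ Hbar x := by
    intro x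
    show G x x ≤ Hbar x
    rw [hG, ← htailX x]
    apply ENNReal.toReal_mono (measure_ne_top P _)
    apply measure_mono
    intro ω hω
    exact hω.1
  have htrans : ∀ x : ℝ, (∫ t in Ioi (0:ℝ), f (t - x)) = ∫ s in Ioi (-x), f s := by
    intro x
    have h1 : (∫ t in Ioi (0:ℝ), f (t - x)) = ∫ t, (Ioi (-x)).indicator f (t - x) := by
      rw [← integral_indicator measurableSet_Ioi]
      congr 1
      funext t
      by_cases h : (0:ℝ) < t
      · rw [indicator_of_mem (by exact h : t ∈ Ioi (0:ℝ)),
          indicator_of_mem (by simp only [mem_Ioi]; linarith)]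
      · rw [indicator_of_notMem (by simpa using h),
          indicator_of_notMem (by simp only [mem_Ioi]; push_neg at h ⊢; linarith)]
    rw [h1, integral_sub_right_eq_self ((Ioi (-x)).indicator f) x,
      integral_indicator measurableSet_Ioi]
  have hfix : ∀ x, f x = Hbar x ^ 2 * Real.exp (∫ s in Ioi (-x), f s) := by
    intro x
    have h2 := heq x x
    have h3 : (∫ t in Ioi (0:ℝ), G (t - x) (t - x)) = ∫ t in Ioi (0:ℝ), f (t - x) := rfl
    rw [h3, htrans x] at h2
    show G x x = _
    rw [h2]
    ring
  have hfH := key f hmeas h0 hle hfix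
  have hnull1 : ∀ q : ℚ, P {ω | Y ω ≤ (q:ℝ) ∧ (q:ℝ) < X ω} = 0 := by
    intro q
    have hAm : MeasurableSet {ω | (q:ℝ) < X ω ∧ (q:ℝ) < Y ω} :=
      (hX measurableSet_Ioi).inter (hY measurableSet_Ioi)
    have hPA : (P {ω | (q:ℝ) < X ω ∧ (q:ℝ) < Y ω}).toReal = Hbar q := by
      rw [← hG q q]
      exact hfH q
    have hPB : (P {ω | (q:ℝ) < X ω}).toReal = Hbar q := htailX q
    have hPAB : P {ω | (q:ℝ) < X ω ∧ (q:ℝ) < Y ω} = P {ω | (q:ℝ) < X ω} := by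
      refine (ENNReal.toReal_eq_toReal_iff' (measure_ne_top P _) (measure_ne_top P _)).1 ?_
      rw [hPA, hPB]
    have hsub2 : {ω | (q:ℝ) < X ω ∧ (q:ℝ) < Y ω} ⊆ {ω | (q:ℝ) < X ω} := fun ω hω => hω.1
    have hdiff : P ({ω | (q:ℝ) < X ω} \ {ω | (q:ℝ) < X ω ∧ (q:ℝ) < Y ω}) = 0 := by
      rw [measure_diff hsub2 hAm.nullMeasurableSet (measure_ne_top P _), hPAB, tsub_self]
    have hset : {ω | Y ω ≤ (q:ℝ) ∧ (q:ℝ) < X ω}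
        = {ω | (q:ℝ) < X ω} \ {ω | (q:ℝ) < X ω ∧ (q:ℝ) < Y ω} := by
      ext ω
      simp only [mem_setOf_eq, mem_diff, not_and, not_lt]
      constructor
      · rintro ⟨h1, h2⟩; exact ⟨h2, fun _ => h1⟩
      · rintro ⟨h1, h2⟩; exact ⟨h2 h1, h1⟩
    rw [hset]
    exact hdiff
  have hnull2 : ∀ q : ℚ, P {ω | X ω ≤ (q:ℝ) ∧ (q:ℝ) < Y ω} = 0 := by
    intro q
    have hAm : MeasurableSet {ω | (q:ℝ) < X ω ∧ (q:ℝ) < Y ω} :=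
      (hX measurableSet_Ioi).inter (hY measurableSet_Ioi)
    have hPA : (P {ω | (q:ℝ) < X ω ∧ (q:ℝ) < Y ω}).toReal = Hbar q := by
      rw [← hG q q]
      exact hfH q
    have hPB : (P {ω | (q:ℝ) < Y ω}).toReal = Hbar q := htailY q
    have hPAB : P {ω | (q:ℝ) < X ω ∧ (q:ℝ) < Y ω} = P {ω | (q:ℝ) < Y ω} := by
      refine (ENNReal.toReal_eq_toReal_iff' (measure_ne_top P _) (measure_ne_top P _)).1 ?_
      rw [hPA, hPB]
    have hsub2 : {ω | (q:ℝ) < X ω ∧ (q:ℝ) < Y ω} ⊆ {ω | (q:ℝ) < Y ω} := fun ω hω => hω.2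
    have hdiff : P ({ω | (q:ℝ) < Y ω} \ {ω | (q:ℝ) < X ω ∧ (q:ℝ) < Y ω}) = 0 := by
      rw [measure_diff hsub2 hAm.nullMeasurableSet (measure_ne_top P _), hPAB, tsub_self]
    have hset : {ω | X ω ≤ (q:ℝ) ∧ (q:ℝ) < Y ω}
        = {ω | (q:ℝ) < Y ω} \ {ω | (q:ℝ) < X ω ∧ (q:ℝ) < Y ω} := by
      ext ω
      simp only [mem_setOf_eq, mem_diff, not_and, not_lt]
      constructor
      · rintro ⟨h1, h2⟩; exact ⟨h2, fun h3 => absurd h3 (not_lt.2 h1)⟩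
      · rintro ⟨h1, h2⟩
        refine ⟨?_, h1⟩
        by_contra hcon
        push_neg at hcon
        exact absurd h1 (not_lt.2 (h2 hcon))
    rw [hset]
    exact hdiff
  have hsub : {ω | X ω ≠ Y ω} ⊆
      ⋃ q : ℚ, ({ω | Y ω ≤ (q:ℝ) ∧ (q:ℝ) < X ω} ∪ {ω | X ω ≤ (q:ℝ) ∧ (q:ℝ) < Y ω}) := by
    intro ω hω
    rcases lt_or_gt_of_ne hω with h | h
    · obtain ⟨q, hq1, hq2⟩ := exists_rat_btwn h
      exact mem_iUnion.2 ⟨q, Or.inr ⟨le_of_lt hq1, hq2⟩⟩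
    · obtain ⟨q, hq1, hq2⟩ := exists_rat_btwn h
      exact mem_iUnion.2 ⟨q, Or.inl ⟨le_of_lt hq1, hq2⟩⟩
  have hzero : P {ω | X ω ≠ Y ω} = 0 := by
    apply measure_mono_null hsub
    apply measure_iUnion_null
    intro q
    exact measure_union_null (hnull1 q) (hnull2 q)
  rw [Filter.EventuallyEq, ae_iff]
  simpa using hzero
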